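/- Let B be a unital C*-algebra, let a, g ∈ B satisfy 0 ≤ a ≤ 1 and 0 ≤ g ≤ 1, and let ε₁, ε₂ > 0. Then, in the C*-algebra M₂(B) of 2×2 matrices over B, the diagonal matrix diag((a − (ε₁ + ε₂))₊, 0) is Cuntz subequivalent to the diagonal matrix diag((gag − ε₁)₊, (1 − g² − ε₂)₊). -/

import Mathlib

open scoped ComplexOrder
open Matrix

noncomputable section

/-- `(b - ε)₊`, the positive part of `b - ε`, via the continuous functional calculus. -/
def posCut {A : Type*} [CStarAlgebra A] (ε : ℝ) (b : A) : A :=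
  cfc (fun t : ℝ => max 0 (t - ε)) b

/-- The positive square root `b^{1/2}` via the continuous functional calculus. -/
def cfcSqrt {A : Type*} [CStarAlgebra A] (b : A) : A :=
  cfc (fun t : ℝ => Real.sqrt t) b

/-- Cuntz subequivalence relative to a subset `B ⊆ A` (the witnesses are taken in `B`):
`a ≼_B b`. -/
def CuntzSubIn {A : Type*} [CStarAlgebra A] (B : Set A) (a b : A) : Prop :=
  ∃ r : ℕ → A, (∀ n, r n ∈ B) ∧
    Filter.Tendsto (fun n => ‖star (r n) * b * r n - a‖) Filter.atTop (nhds 0)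

/-- Cuntz subequivalence `a ≼_A b` in `A`. -/
def CuntzSub {A : Type*} [CStarAlgebra A] (a b : A) : Prop :=
  CuntzSubIn Set.univ a b

/-- Positivity of a square matrix over a ⋆-ring: `M = Nᴴ * N` for some `N`. -/
def MatPos {A : Type*} [Ring A] [StarRing A] {n : ℕ} (M : Matrix (Fin n) (Fin n) A) : Prop :=
  ∃ N : Matrix (Fin n) (Fin n) A, M = Nᴴ * N

/-- A linear map is completely positive and contractive: every matrix amplification
preserves positivity, and the map is norm-contractive. -/
def IsCPC {A B : Type*} [NormedRing A] [StarRing A] [Module ℂ A]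
    [NormedRing B] [StarRing B] [Module ℂ B] (φ : A →ₗ[ℂ] B) : Prop :=
  (∀ (n : ℕ) (M : Matrix (Fin n) (Fin n) A), MatPos M → MatPos (M.map φ)) ∧
    ∀ a : A, ‖φ a‖ ≤ ‖a‖

/-- The fixed point set `A^α` of an action. -/
def fixedPts {G A : Type*} [Monoid G] [CStarAlgebra A] (α : G →* (A ≃ₐ[ℂ] A)) : Set A :=
  {a : A | ∀ g : G, α g a = a}

/-- `closure (d A d)`, the hereditary subalgebra generated by `d`. -/
def herCl {A : Type*} [CStarAlgebra A] (d : A) : Set A :=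
  closure (Set.range fun a : A => d * a * d)

/-- `closure (d B d)` for a subset `B ⊆ A`. -/
def herClIn {A : Type*} [CStarAlgebra A] (d : A) (B : Set A) : Set A :=
  closure {x : A | ∃ a ∈ B, x = d * a * d}

/-- Left translation on `C(G, ℂ)`: `(Lt g f) h = f (g⁻¹ * h)`. -/
def Lt {G : Type*} [Group G] [TopologicalSpace G] [IsTopologicalGroup G] (g : G)
    (f : C(G, ℂ)) : C(G, ℂ) :=
  f.comp (Homeomorph.mulLeft g⁻¹)

/-- The weak tracial Rokhlin property with comparison for an action of a compact group `G`
on a unital C⋆-algebra `A`. -/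
def WTRokhlinComp (G : Type*) {A : Type*} [Group G] [TopologicalSpace G] [IsTopologicalGroup G]
    [CompactSpace G] [CStarAlgebra A] [PartialOrder A] [StarOrderedRing A]
    (α : G →* (A ≃ₐ[ℂ] A)) : Prop :=
  ∀ ε > (0 : ℝ), ∀ F : Finset A, ∀ S : Finset C(G, ℂ), ∀ x : A, 0 ≤ x → ‖x‖ = 1 →
    ∀ y ∈ fixedPts α, 0 ≤ y → y ≠ 0 →
      ∃ d ∈ fixedPts α, 0 ≤ d ∧ ‖d‖ ≤ 1 ∧
        ∃ ψ : C(G, ℂ) →ₗ[ℂ] A, IsCPC ψ ∧ (∀ f : C(G, ℂ), ψ f ∈ herCl d) ∧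
          (∀ f₁ ∈ S, ∀ f₂ ∈ S, ‖ψ 1 * ψ (f₁ * f₂) - ψ f₁ * ψ f₂‖ < ε) ∧
          (∀ f ∈ S, ∀ a ∈ F, ‖ψ f * a - a * ψ f‖ < ε) ∧
          (∀ f ∈ S, (⨆ g : G, ‖ψ (Lt g f) - (α g) (ψ f)‖) < ε) ∧
          ψ 1 = d ∧
          CuntzSub (posCut ε (1 - d)) x ∧
          CuntzSubIn (fixedPts α) (posCut ε (1 - d)) y ∧
          CuntzSubIn (fixedPts α) (posCut ε (1 - d)) d ∧
          1 - ε < ‖d * x * d‖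

/-- Simplicity of a C⋆-algebra: the only closed two-sided ideals are `0` and everything. -/
def IsSimpleCStar (A : Type*) [CStarAlgebra A] : Prop :=
  ∀ I : TwoSidedIdeal A, IsClosed (I : Set A) → I = ⊥ ∨ I = ⊤


/-- Cuntz subequivalence for matrices over `A`, with witnesses whose entries lie in a
subset `B ⊆ A`.  Convergence is with respect to the (pi, equivalently norm) topology on
matrices. -/
def MatCuntzSubIn {A : Type*} [CStarAlgebra A] {n : ℕ} (B : Set A)
    (a b : Matrix (Fin n) (Fin n) A) : Prop :=
  ∃ r : ℕ → Matrix (Fin n) (Fin n) A, (∀ k i j, r k i j ∈ B) ∧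
    Filter.Tendsto (fun k => star (r k) * b * r k) Filter.atTop (nhds a)


section CutdownAux

open Filter Topology Polynomial

variable {B : Type*} [CStarAlgebra B] [PartialOrder B] [StarOrderedRing B]

/-- Sequential Cuntz-type domination (no constraint on witnesses). -/
private def CB (a b : B) : Prop :=
  ∃ r : ℕ → B, Tendsto (fun n => ‖star (r n) * b * r n - a‖) atTop (nhds 0)

private lemma cb_of_eq {a b : B} (r : B) (h : star r * b * r = a) : CB a b :=
  ⟨fun _ => r, by simpa [h] using tendsto_const_nhds⟩

private lemma norm_conj_le (x y : B) : ‖star x * y * x‖ ≤ ‖x‖ ^ 2 * ‖y‖ := by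
  calc ‖star x * y * x‖ ≤ ‖star x * y‖ * ‖x‖ := norm_mul_le _ _
    _ ≤ ‖star x‖ * ‖y‖ * ‖x‖ := by gcongr; exact norm_mul_le _ _
    _ = ‖x‖ ^ 2 * ‖y‖ := by rw [norm_star]; ring

set_option maxHeartbeats 1000000 in
private lemma cb_trans {a b c : B} (h₁ : CB a b) (h₂ : CB b c) : CB a c := by
  obtain ⟨r, hr⟩ := h₁
  obtain ⟨s, hs⟩ := h₂
  have key : ∀ n : ℕ, ∃ m : ℕ,
      ‖star (s m) * c * s m - b‖ < (1 / ((n : ℝ) + 1)) / (‖r n‖ ^ 2 + 1) := by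
    intro n
    have hpos : 0 < (1 / ((n : ℝ) + 1)) / (‖r n‖ ^ 2 + 1) := by positivity
    obtain ⟨N, hN⟩ := (Metric.tendsto_atTop.mp hs) _ hpos
    refine ⟨N, ?_⟩
    have := hN N le_rfl
    rwa [Real.dist_eq, sub_zero, abs_of_nonneg (norm_nonneg _)] at this
  choose m hm using key
  refine ⟨fun n => s (m n) * r n, ?_⟩
  have hb : ∀ n : ℕ, ‖star (s (m n) * r n) * c * (s (m n) * r n) - a‖ ≤
      1 / ((n : ℝ) + 1) + ‖star (r n) * b * r n - a‖ := by
    intro n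
    have hid : star (s (m n) * r n) * c * (s (m n) * r n) - a =
        star (r n) * (star (s (m n)) * c * s (m n) - b) * r n +
          (star (r n) * b * r n - a) := by
      simp only [StarMul.star_mul]
      noncomm_ring
    rw [hid]
    refine (norm_add_le _ _).trans (add_le_add ?_ le_rfl)
    calc ‖star (r n) * (star (s (m n)) * c * s (m n) - b) * r n‖
        ≤ ‖r n‖ ^ 2 * ‖star (s (m n)) * c * s (m n) - b‖ := norm_conj_le _ _
      _ ≤ ‖r n‖ ^ 2 * ((1 / ((n : ℝ) + 1)) / (‖r n‖ ^ 2 + 1)) := by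
          gcongr
          exact (hm n).le
      _ = (1 / ((n : ℝ) + 1)) * (‖r n‖ ^ 2 / (‖r n‖ ^ 2 + 1)) := by ring
      _ ≤ (1 / ((n : ℝ) + 1)) * 1 := by
          refine mul_le_mul_of_nonneg_left ?_ (by positivity)
          rw [div_le_one (by positivity)]; linarith
      _ = 1 / ((n : ℝ) + 1) := mul_one _
  refine squeeze_zero (fun n => norm_nonneg _) hb ?_
  simpa using tendsto_one_div_add_atTop_nhds_zero_nat.add hr

set_option maxHeartbeats 1000000 in
/-- The key algebraic `flip` identity `x⋆ f(x x⋆) x = (id · f)(x⋆ x)`. -/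
private lemma star_mul_cfc_mul (x : B) (f : ℝ → ℝ) (hf : Continuous f) :
    star x * cfc f (x * star x) * x = cfc (fun t : ℝ => t * f t) (star x * x) := by
  nontriviality B
  have hvsa : IsSelfAdjoint (star x * x) := IsSelfAdjoint.star_mul_self x
  have hwsa : IsSelfAdjoint (x * star x) := IsSelfAdjoint.mul_star_self x
  have hpow : ∀ k : ℕ, star x * (x * star x) ^ k * x = (star x * x) ^ (k + 1) := by
    intro k
    induction k with
    | zero => simp [pow_one]
    | succ k ih =>
      have h1 : (x * star x) ^ (k + 1) = (x * star x) ^ k * x * star x := by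
        rw [pow_succ, ← mul_assoc]
      rw [h1]
      calc star x * ((x * star x) ^ k * x * star x) * x
          = (star x * (x * star x) ^ k * x) * (star x * x) := by
            simp only [mul_assoc]
        _ = (star x * x) ^ (k + 1) * (star x * x) := by rw [ih]
        _ = (star x * x) ^ (k + 1 + 1) := by rw [← pow_succ]
  have hpoly : ∀ p : ℝ[X], star x * aeval (x * star x) p * x = aeval (star x * x) (X * p) := by
    intro p
    induction p using Polynomial.induction_on' with
    | add p q hp hq =>
      have hXpq : X * (p + q) = X * p + X * q := mul_add _ _ _
      rw [hXpq, map_add, map_add, mul_add, add_mul, hp, hq]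
    | monomial k r =>
      rw [aeval_monomial, ← Algebra.smul_def, mul_smul_comm, smul_mul_assoc, hpow k,
        _root_.map_mul, aeval_X, aeval_monomial, ← Algebra.smul_def, mul_smul_comm, ← pow_succ']
  -- now approximate a general continuous function by polynomials
  set R : ℝ := max ‖star x * x‖ ‖x * star x‖ with hRdef
  have hR0 : (0 : ℝ) ≤ R := le_trans (norm_nonneg _) (le_max_left _ _)
  have hspec : ∀ y : B, IsSelfAdjoint y → ‖y‖ ≤ R → spectrum ℝ y ⊆ Set.Icc (-R) R := by
    intro y hy hyR t ht
    have h1 : ‖t‖ ≤ ‖y‖ := spectrum.norm_le_norm_of_mem ht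
    rw [Real.norm_eq_abs] at h1
    exact Set.mem_Icc.mpr (abs_le.mp (h1.trans hyR))
  have hspecv := hspec _ hvsa (le_max_left _ _)
  have hspecw := hspec _ hwsa (le_max_right _ _)
  by_contra hne
  have hpos : 0 < ‖star x * cfc f (x * star x) * x - cfc (fun t : ℝ => t * f t) (star x * x)‖ := by
    rw [norm_pos_iff, sub_ne_zero]; exact hne
  set ε : ℝ := ‖star x * cfc f (x * star x) * x - cfc (fun t : ℝ => t * f t) (star x * x)‖
    with hεdef
  set δ : ℝ := ε / (‖x‖ ^ 2 + R + 1) with hδdef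
  have hδ : 0 < δ := div_pos hpos (by positivity)
  obtain ⟨p, hp⟩ := exists_polynomial_near_continuousMap (-R) R
    ⟨fun t => f (t : ℝ), hf.comp continuous_subtype_val⟩ δ hδ
  have hpf : ∀ t ∈ Set.Icc (-R) R, |p.eval t - f t| ≤ δ := by
    intro t ht
    have h1 := ContinuousMap.norm_coe_le_norm
      (p.toContinuousMapOn (Set.Icc (-R) R) -
        ⟨fun t => f (t : ℝ), hf.comp continuous_subtype_val⟩) ⟨t, ht⟩
    refine le_trans ?_ (h1.trans hp.le)
    simp only [ContinuousMap.sub_apply, Polynomial.toContinuousMapOn_apply,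
      Polynomial.toContinuousMap_apply, ContinuousMap.coe_mk, Real.norm_eq_abs]
    exact le_rfl
  have hpc : Continuous fun t : ℝ => p.eval t := p.continuous
  have hcfcp : star x * cfc (fun t : ℝ => p.eval t) (x * star x) * x
      = cfc (fun t : ℝ => t * p.eval t) (star x * x) := by
    rw [cfc_polynomial p (x * star x) hwsa, hpoly p]
    have h2 : (fun t : ℝ => t * p.eval t) = fun t : ℝ => (X * p).eval t := by
      funext t; simp [eval_mul]
    rw [h2, cfc_polynomial (X * p) (star x * x) hvsa]
  have h2 : ‖cfc f (x * star x) - cfc (fun t : ℝ => p.eval t) (x * star x)‖ ≤ δ := by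
    rw [← cfc_sub f (fun t : ℝ => p.eval t) (x * star x) hf.continuousOn hpc.continuousOn]
    refine norm_cfc_le hδ.le fun t ht => ?_
    rw [Real.norm_eq_abs, abs_sub_comm]
    exact hpf t (hspecw ht)
  have h3 : ‖cfc (fun t : ℝ => t * p.eval t) (star x * x)
      - cfc (fun t : ℝ => t * f t) (star x * x)‖ ≤ R * δ := by
    rw [← cfc_sub (fun t : ℝ => t * p.eval t) (fun t : ℝ => t * f t) (star x * x)
      (continuous_id.mul hpc).continuousOn (continuous_id.mul hf).continuousOn]
    refine norm_cfc_le (by positivity) fun t ht => ?_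
    have hmem := hspecv ht
    have habs : |t| ≤ R := abs_le.mpr (Set.mem_Icc.mp hmem)
    have h4 : t * p.eval t - t * f t = t * (p.eval t - f t) := by ring
    rw [Real.norm_eq_abs, h4, abs_mul]
    exact mul_le_mul habs (hpf t hmem) (abs_nonneg _) hR0
  have hsplit : star x * cfc f (x * star x) * x - cfc (fun t : ℝ => t * f t) (star x * x)
      = star x * (cfc f (x * star x) - cfc (fun t : ℝ => p.eval t) (x * star x)) * x
        + (cfc (fun t : ℝ => t * p.eval t) (star x * x)
            - cfc (fun t : ℝ => t * f t) (star x * x)) := by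
    rw [← hcfcp]; noncomm_ring
  have hfinal : ε ≤ ‖x‖ ^ 2 * δ + R * δ := by
    rw [hεdef, hsplit]
    refine (norm_add_le _ _).trans (add_le_add ?_ h3)
    calc ‖star x * (cfc f (x * star x) - cfc (fun t : ℝ => p.eval t) (x * star x)) * x‖
        ≤ ‖x‖ ^ 2 * ‖cfc f (x * star x) - cfc (fun t : ℝ => p.eval t) (x * star x)‖ :=
          norm_conj_le _ _
      _ ≤ ‖x‖ ^ 2 * δ := by gcongr
  have hlt : ‖x‖ ^ 2 * δ + R * δ < ε := by
    have h5 : ‖x‖ ^ 2 * δ + R * δ = ε * ((‖x‖ ^ 2 + R) / (‖x‖ ^ 2 + R + 1)) := by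
      rw [hδdef]; field_simp
    rw [h5]
    calc ε * ((‖x‖ ^ 2 + R) / (‖x‖ ^ 2 + R + 1)) < ε * 1 := by
          gcongr
          rw [div_lt_one (by positivity)]; linarith
      _ = ε := mul_one _
  linarith

private lemma sqrt_mul_sqrt {u : B} (hu : 0 ≤ u) : cfc Real.sqrt u * cfc Real.sqrt u = u := by
  have husa : IsSelfAdjoint u := .of_nonneg hu
  rw [← cfc_mul Real.sqrt Real.sqrt u Real.continuous_sqrt.continuousOn
    Real.continuous_sqrt.continuousOn]
  have h1 : cfc (fun t : ℝ => Real.sqrt t * Real.sqrt t) u = cfc (id : ℝ → ℝ) u :=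
    cfc_congr fun t ht => Real.mul_self_sqrt (spectrum_nonneg_of_nonneg hu ht)
  rw [h1, cfc_id ℝ u]

set_option maxHeartbeats 1000000 in
private lemma cb_of_le {u v : B} (hu : 0 ≤ u) (huv : u ≤ v) : CB u v := by
  have hv : 0 ≤ v := hu.trans huv
  have husa : IsSelfAdjoint u := .of_nonneg hu
  have hvsa : IsSelfAdjoint v := .of_nonneg hv
  have hsq : cfc Real.sqrt u * cfc Real.sqrt u = u := sqrt_mul_sqrt hu
  have hsqsa : IsSelfAdjoint (cfc Real.sqrt u) := cfc_predicate _ u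
  refine ⟨fun n => cfc (fun t : ℝ => Real.sqrt ((max 0 t + 1 / ((n : ℝ) + 1))⁻¹)) v
    * cfc Real.sqrt u, ?_⟩
  refine squeeze_zero (fun n => norm_nonneg _) ?_ tendsto_one_div_add_atTop_nhds_zero_nat
  intro n
  set δ : ℝ := 1 / ((n : ℝ) + 1) with hδdef
  have hδ : 0 < δ := by positivity
  have hhc : Continuous fun t : ℝ => Real.sqrt ((max 0 t + δ)⁻¹) := by
    refine Real.continuous_sqrt.comp (Continuous.inv₀
      ((continuous_const.max continuous_id).add continuous_const) fun t => ?_)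
    have : (0:ℝ) ≤ max 0 t := le_max_left _ _
    positivity
  set h : ℝ → ℝ := fun t => Real.sqrt ((max 0 t + δ)⁻¹) with hhdef
  have hhsa : IsSelfAdjoint (cfc h v) := cfc_predicate _ v
  have hgt : ∀ t : ℝ, 0 ≤ t → h t * t * h t = t * (t + δ)⁻¹ := by
    intro t ht
    have h2 : h t * h t = (t + δ)⁻¹ := by
      simp only [hhdef, max_eq_right ht]
      exact Real.mul_self_sqrt (by positivity)
    calc h t * t * h t = (h t * h t) * t := by ring
      _ = t * (t + δ)⁻¹ := by rw [h2]; ring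
  have hgle : ∀ t : ℝ, 0 ≤ t → 0 ≤ 1 - h t * t * h t := by
    intro t ht
    rw [hgt t ht, ← div_eq_mul_inv]
    have : t / (t + δ) ≤ 1 := by
      rw [div_le_one (by positivity)]; linarith
    linarith
  have hstar : star (cfc h v * cfc Real.sqrt u) = cfc Real.sqrt u * cfc h v := by
    rw [StarMul.star_mul, hsqsa.star_eq, hhsa.star_eq]
  have hinner : cfc h v * v * cfc h v = cfc (fun t : ℝ => h t * t * h t) v := by
    rw [cfc_mul (fun t : ℝ => h t * t) h v ((hhc.mul continuous_id).continuousOn)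
        hhc.continuousOn,
      cfc_mul h (fun t : ℝ => t) v hhc.continuousOn continuousOn_id, cfc_id' ℝ v]
  have hsc : Continuous fun t : ℝ => Real.sqrt (1 - h t * t * h t) :=
    Real.continuous_sqrt.comp (continuous_const.sub ((hhc.mul continuous_id).mul hhc))
  have hone : cfc (fun t : ℝ => 1 - h t * t * h t) v
      = 1 - cfc (fun t : ℝ => h t * t * h t) v := by
    rw [cfc_sub (fun _ : ℝ => (1:ℝ)) (fun t : ℝ => h t * t * h t) v
      continuousOn_const ((hhc.mul continuous_id).mul hhc).continuousOn, cfc_const_one ℝ v]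
  have hone' : cfc (fun t : ℝ => h t * t * h t) v
      = 1 - cfc (fun t : ℝ => 1 - h t * t * h t) v := by rw [hone]; abel
  have key : star (cfc h v * cfc Real.sqrt u) * v * (cfc h v * cfc Real.sqrt u) - u
      = -(cfc Real.sqrt u * cfc (fun t : ℝ => 1 - h t * t * h t) v * cfc Real.sqrt u) := by
    rw [hstar]
    have h1 : cfc Real.sqrt u * cfc h v * v * (cfc h v * cfc Real.sqrt u)
        = cfc Real.sqrt u * (cfc h v * v * cfc h v) * cfc Real.sqrt u := by
      simp only [mul_assoc]
    rw [h1, hinner, hone', mul_sub, sub_mul, mul_one, hsq]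
    abel
  rw [key, norm_neg]
  -- now estimate the norm
  have hfnsa : IsSelfAdjoint (cfc (fun t : ℝ => Real.sqrt (1 - h t * t * h t)) v) :=
    cfc_predicate _ v
  set fn := cfc (fun t : ℝ => Real.sqrt (1 - h t * t * h t)) v with hfndef
  have hfnfn : fn * fn = cfc (fun t : ℝ => 1 - h t * t * h t) v := by
    rw [hfndef, ← cfc_mul _ _ v hsc.continuousOn hsc.continuousOn]
    exact cfc_congr fun t ht =>
      Real.mul_self_sqrt (hgle t (spectrum_nonneg_of_nonneg hv ht))
  have hnorm1 : ‖cfc Real.sqrt u * cfc (fun t : ℝ => 1 - h t * t * h t) v * cfc Real.sqrt u‖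
      = ‖fn * cfc Real.sqrt u‖ * ‖fn * cfc Real.sqrt u‖ := by
    rw [← hfnfn]
    have h1 : cfc Real.sqrt u * (fn * fn) * cfc Real.sqrt u
        = star (fn * cfc Real.sqrt u) * (fn * cfc Real.sqrt u) := by
      rw [StarMul.star_mul, hfnsa.star_eq, hsqsa.star_eq]; noncomm_ring
    rw [h1, CStarRing.norm_star_mul_self]
  have hnorm2 : ‖fn * u * fn‖ = ‖fn * cfc Real.sqrt u‖ * ‖fn * cfc Real.sqrt u‖ := by
    have h1 : fn * u * fn = (fn * cfc Real.sqrt u) * star (fn * cfc Real.sqrt u) := by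
      rw [StarMul.star_mul, hfnsa.star_eq, hsqsa.star_eq]
      conv_lhs => rw [← hsq]
      noncomm_ring
    rw [h1, CStarRing.norm_self_mul_star]
  have hposfuf : 0 ≤ fn * u * fn := by
    have h1 := star_left_conjugate_nonneg hu fn
    rwa [hfnsa.star_eq] at h1
  have hlefuf : fn * u * fn ≤ fn * v * fn :=
    IsSelfAdjoint.conjugate_le_conjugate huv hfnsa
  have hfvf : ‖fn * v * fn‖ ≤ δ := by
    have h1 : fn * v * fn = cfc (fun t : ℝ =>
        Real.sqrt (1 - h t * t * h t) * t * Real.sqrt (1 - h t * t * h t)) v := by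
      rw [cfc_mul (fun t : ℝ => Real.sqrt (1 - h t * t * h t) * t)
          (fun t : ℝ => Real.sqrt (1 - h t * t * h t)) v
          ((hsc.mul continuous_id).continuousOn) hsc.continuousOn,
        cfc_mul (fun t : ℝ => Real.sqrt (1 - h t * t * h t)) (fun t : ℝ => t) v
          hsc.continuousOn continuousOn_id, cfc_id' ℝ v, hfndef]
    rw [h1]
    refine norm_cfc_le hδ.le fun t ht => ?_
    have ht0 : 0 ≤ t := spectrum_nonneg_of_nonneg hv ht
    have h2 : Real.sqrt (1 - h t * t * h t) * t * Real.sqrt (1 - h t * t * h t)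
        = (1 - h t * t * h t) * t := by
      have h3 := Real.mul_self_sqrt (hgle t ht0)
      calc Real.sqrt (1 - h t * t * h t) * t * Real.sqrt (1 - h t * t * h t)
          = (Real.sqrt (1 - h t * t * h t) * Real.sqrt (1 - h t * t * h t)) * t := by ring
        _ = (1 - h t * t * h t) * t := by rw [h3]
    rw [Real.norm_eq_abs, h2, hgt t ht0]
    have htδ : (0:ℝ) < t + δ := by linarith
    have h4 : (1 - t * (t + δ)⁻¹) * t = δ * t / (t + δ) := by
      field_simp
      ring
    rw [h4, abs_of_nonneg (by positivity), div_le_iff₀ htδ]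
    nlinarith
  calc ‖cfc Real.sqrt u * cfc (fun t : ℝ => 1 - h t * t * h t) v * cfc Real.sqrt u‖
      = ‖fn * u * fn‖ := by rw [hnorm1, hnorm2]
    _ ≤ ‖fn * v * fn‖ := CStarAlgebra.norm_le_norm_of_nonneg_of_le hposfuf hlefuf
    _ ≤ δ := hfvf

private lemma posCut_nonneg (ε : ℝ) (b : B) : 0 ≤ posCut ε b := by
  exact cfc_nonneg fun t _ => le_max_left 0 _

private lemma cfc_sub_const (b : B) (ε : ℝ) (hb : IsSelfAdjoint b) :
    cfc (fun t : ℝ => t - ε) b = b - algebraMap ℝ B ε := by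
  rw [cfc_sub (fun t : ℝ => t) (fun _ : ℝ => ε) b continuousOn_id continuousOn_const,
    cfc_id' ℝ b, cfc_const ε b]

private lemma sub_algebraMap_le_posCut (b : B) (ε : ℝ) (hb : IsSelfAdjoint b) :
    b - algebraMap ℝ B ε ≤ posCut ε b := by
  rw [← cfc_sub_const b ε hb]
  exact cfc_mono fun t _ => le_max_right 0 (t - ε)

private lemma posCut_eq_shift (b : B) (ε : ℝ) (hb : IsSelfAdjoint b) :
    posCut ε b = cfc (fun t : ℝ => max 0 t) (b - algebraMap ℝ B ε) := by
  rw [← cfc_sub_const b ε hb,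
    ← cfc_comp (fun s : ℝ => max 0 s) (fun t : ℝ => t - ε) b hb
      (continuous_const.max continuous_id).continuousOn
      (continuous_id.sub continuous_const).continuousOn]
  rfl

set_option maxHeartbeats 1000000 in
/-- If `z` is self-adjoint and `z - ε ≤ w` with `w ≥ 0`, then `(z - ε)₊ ≼ w`. -/
private lemma cb_posCut_of_le {b w : B} (ε : ℝ) (hb : IsSelfAdjoint b) (hw : 0 ≤ w)
    (hle : b - algebraMap ℝ B ε ≤ w) : CB (posCut ε b) w := by
  have halg : IsSelfAdjoint (algebraMap ℝ B ε) := by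
    rw [← cfc_const ε b hb]; exact cfc_predicate _ b
  set z := b - algebraMap ℝ B ε with hzdef
  have hzsa : IsSelfAdjoint z := hb.sub halg
  have hmc : Continuous fun t : ℝ => max 0 t := continuous_const.max continuous_id
  have hcut : posCut ε b = cfc (fun t : ℝ => max 0 t) z := posCut_eq_shift b ε hb
  have he0 : 0 ≤ cfc (fun t : ℝ => max 0 t) z := cfc_nonneg fun t _ => le_max_left _ _
  have hesa : IsSelfAdjoint (cfc (fun t : ℝ => max 0 t) z) := cfc_predicate _ z
  have hqsa : IsSelfAdjoint (cfc (fun t : ℝ => Real.sqrt (max 0 t)) z) := cfc_predicate _ z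
  set e := cfc (fun t : ℝ => max 0 t) z with hedef
  set q := cfc (fun t : ℝ => Real.sqrt (max 0 t)) z with hqdef
  have h1 : q * z * q = e * e := by
    have e1 : cfc (fun t : ℝ => Real.sqrt (max 0 t) * t * Real.sqrt (max 0 t)) z
        = q * z * q := by
      have hsqmc : Continuous fun t : ℝ => Real.sqrt (max 0 t) :=
        Real.continuous_sqrt.comp hmc
      rw [cfc_mul (fun t : ℝ => Real.sqrt (max 0 t) * t) (fun t : ℝ => Real.sqrt (max 0 t)) z
          ((hsqmc.mul continuous_id).continuousOn) hsqmc.continuousOn,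
        cfc_mul (fun t : ℝ => Real.sqrt (max 0 t)) (fun t : ℝ => t) z hsqmc.continuousOn
          continuousOn_id, cfc_id' ℝ z]
    have e2 : cfc (fun t : ℝ => max 0 t * max 0 t) z = e * e :=
      cfc_mul (fun t : ℝ => max 0 t) (fun t : ℝ => max 0 t) z hmc.continuousOn hmc.continuousOn
    have e3 : (fun t : ℝ => Real.sqrt (max 0 t) * t * Real.sqrt (max 0 t))
        = fun t : ℝ => max 0 t * max 0 t := by
      funext t
      rcases le_total t 0 with h | h
      · rw [max_eq_left h]
        simp
      · rw [max_eq_right h]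
        have h3 := Real.mul_self_sqrt h
        calc Real.sqrt t * t * Real.sqrt t = (Real.sqrt t * Real.sqrt t) * t := by ring
          _ = t * t := by rw [h3]
    rw [← e1, e3, e2]
  have h2 : e * e ≤ q * w * q := by
    rw [← h1]
    exact IsSelfAdjoint.conjugate_le_conjugate hle hqsa
  have hee0 : 0 ≤ e * e := by
    have := star_mul_self_nonneg e
    rwa [hesa.star_eq] at this
  have h3 : CB (e * e) (q * w * q) := cb_of_le hee0 h2
  have h4 : CB (q * w * q) w := cb_of_eq q (by rw [hqsa.star_eq])
  have h5 : CB e (e * e) := by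
    refine ⟨fun n => cfc (fun t : ℝ =>
      Real.sqrt (max 0 t) * (max 0 t + 1 / ((n : ℝ) + 1))⁻¹) z, ?_⟩
    have h3tend : Tendsto (fun n : ℕ => 3 * (1 / ((n : ℝ) + 1))) atTop (nhds 0) := by
      simpa using tendsto_one_div_add_atTop_nhds_zero_nat.const_mul (3:ℝ)
    refine squeeze_zero (fun n => norm_nonneg _) ?_ h3tend
    intro n
    set δ : ℝ := 1 / ((n : ℝ) + 1) with hδdef
    have hδ : 0 < δ := by positivity
    have hkc : Continuous fun t : ℝ => Real.sqrt (max 0 t) * (max 0 t + δ)⁻¹ := by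
      refine (Real.continuous_sqrt.comp hmc).mul
        (Continuous.inv₀ (hmc.add continuous_const) fun t => ?_)
      have : (0:ℝ) ≤ max 0 t := le_max_left _ _
      positivity
    set k : ℝ → ℝ := fun t => Real.sqrt (max 0 t) * (max 0 t + δ)⁻¹ with hkdef
    have hksa : IsSelfAdjoint (cfc k z) := cfc_predicate _ z
    have hee : e * e = cfc (fun t : ℝ => max 0 t * max 0 t) z :=
      (cfc_mul (fun t : ℝ => max 0 t) (fun t : ℝ => max 0 t) z hmc.continuousOn
        hmc.continuousOn).symm
    have hbig : star (cfc k z) * (e * e) * cfc k z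
        = cfc (fun t : ℝ => k t * (max 0 t * max 0 t) * k t) z := by
      rw [hksa.star_eq, hee,
        ← cfc_mul k (fun t : ℝ => max 0 t * max 0 t) z hkc.continuousOn
          ((hmc.mul hmc).continuousOn),
        ← cfc_mul (fun t : ℝ => k t * (max 0 t * max 0 t)) k z
          ((hkc.mul (hmc.mul hmc)).continuousOn) hkc.continuousOn]
    rw [hbig, hedef, ← cfc_sub (fun t : ℝ => k t * (max 0 t * max 0 t) * k t)
      (fun t : ℝ => max 0 t) z (((hkc.mul (hmc.mul hmc)).mul hkc).continuousOn)
      hmc.continuousOn]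
    refine norm_cfc_le (by positivity) fun t _ => ?_
    set s : ℝ := max 0 t with hsdef
    have hs0 : (0:ℝ) ≤ s := le_max_left _ _
    have hsδ : (0:ℝ) < s + δ := by linarith
    have hsq : Real.sqrt s * Real.sqrt s = s := Real.mul_self_sqrt hs0
    have e1 : k t * (s * s) * k t = s ^ 3 / (s + δ) ^ 2 := by
      have e0 : k t * (s * s) * k t
          = (Real.sqrt s * Real.sqrt s) * (s * s) * ((s + δ)⁻¹ * (s + δ)⁻¹) := by
        simp only [hkdef, ← hsdef]; ring
      rw [e0, hsq, ← mul_inv, div_eq_mul_inv]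
      congr 1
      · ring
      · congr 1; ring
    rw [Real.norm_eq_abs, e1]
    have e2 : s ^ 3 / (s + δ) ^ 2 - s = -(s * δ * (2 * s + δ) / (s + δ) ^ 2) := by
      field_simp
      try ring
    rw [e2, abs_neg, abs_of_nonneg (by positivity), div_le_iff₀ (by positivity)]
    nlinarith [mul_nonneg (mul_nonneg hs0 hs0) hδ.le, mul_nonneg hs0 (mul_nonneg hδ.le hδ.le),
      mul_nonneg hδ.le (mul_nonneg hδ.le hδ.le)]
  rw [hcut]
  exact cb_trans h5 (cb_trans h3 h4)

set_option maxHeartbeats 1000000 in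
/-- `(x⋆x - ε)₊ ≼ (xx⋆ - ε)₊`. -/
private lemma cb_posCut_star_mul (x : B) (ε : ℝ) (hε : 0 ≤ ε) :
    CB (posCut ε (star x * x)) (posCut ε (x * star x)) := by
  have hvsa : IsSelfAdjoint (star x * x) := IsSelfAdjoint.star_mul_self x
  have hvpos : 0 ≤ star x * x := star_mul_self_nonneg x
  have hfc : Continuous fun t : ℝ => max 0 (t - ε) :=
    continuous_const.max (continuous_id.sub continuous_const)
  refine ⟨fun n => x * cfc (fun t : ℝ =>
    Real.sqrt ((max 0 t + 1 / ((n : ℝ) + 1))⁻¹)) (star x * x), ?_⟩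
  refine squeeze_zero (fun n => norm_nonneg _) ?_ tendsto_one_div_add_atTop_nhds_zero_nat
  intro n
  set δ : ℝ := 1 / ((n : ℝ) + 1) with hδdef
  have hδ : 0 < δ := by positivity
  have hmc : Continuous fun t : ℝ => max 0 t := continuous_const.max continuous_id
  have hhc : Continuous fun t : ℝ => Real.sqrt ((max 0 t + δ)⁻¹) := by
    refine Real.continuous_sqrt.comp (Continuous.inv₀ (hmc.add continuous_const) fun t => ?_)
    have : (0:ℝ) ≤ max 0 t := le_max_left _ _
    positivity
  set h : ℝ → ℝ := fun t => Real.sqrt ((max 0 t + δ)⁻¹) with hhdef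
  have hhsa : IsSelfAdjoint (cfc h (star x * x)) := cfc_predicate _ _
  have hstar : star (x * cfc h (star x * x)) = cfc h (star x * x) * star x := by
    rw [StarMul.star_mul, hhsa.star_eq]
  have hmain : star (x * cfc h (star x * x)) * posCut ε (x * star x) * (x * cfc h (star x * x))
      = cfc (fun t : ℝ => h t * (t * max 0 (t - ε)) * h t) (star x * x) := by
    rw [hstar]
    have h1 : star x * posCut ε (x * star x) * x
        = cfc (fun t : ℝ => t * max 0 (t - ε)) (star x * x) :=
      star_mul_cfc_mul x (fun t : ℝ => max 0 (t - ε)) hfc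
    calc cfc h (star x * x) * star x * posCut ε (x * star x) * (x * cfc h (star x * x))
        = cfc h (star x * x) * (star x * posCut ε (x * star x) * x) * cfc h (star x * x) := by
          simp only [mul_assoc]
      _ = cfc h (star x * x) * cfc (fun t : ℝ => t * max 0 (t - ε)) (star x * x)
            * cfc h (star x * x) := by rw [h1]
      _ = cfc (fun t : ℝ => h t * (t * max 0 (t - ε)) * h t) (star x * x) := by
          rw [← cfc_mul h (fun t : ℝ => t * max 0 (t - ε)) (star x * x) hhc.continuousOn
              ((continuous_id.mul hfc).continuousOn),
            ← cfc_mul (fun t : ℝ => h t * (t * max 0 (t - ε))) h (star x * x)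
              ((hhc.mul (continuous_id.mul hfc)).continuousOn) hhc.continuousOn]
  rw [hmain]
  have hpc : posCut ε (star x * x) = cfc (fun t : ℝ => max 0 (t - ε)) (star x * x) := rfl
  rw [hpc, ← cfc_sub (fun t : ℝ => h t * (t * max 0 (t - ε)) * h t)
    (fun t : ℝ => max 0 (t - ε)) (star x * x)
    (((hhc.mul (continuous_id.mul hfc)).mul hhc).continuousOn) hfc.continuousOn]
  refine norm_cfc_le hδ.le fun t ht => ?_
  have ht0 : 0 ≤ t := spectrum_nonneg_of_nonneg hvpos ht
  have htδ : (0:ℝ) < t + δ := by linarith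
  have hh2 : h t * h t = (t + δ)⁻¹ := by
    simp only [hhdef, max_eq_right ht0]
    exact Real.mul_self_sqrt (by positivity)
  have hft0 : (0:ℝ) ≤ max 0 (t - ε) := le_max_left _ _
  have hftt : max 0 (t - ε) ≤ t := max_le ht0 (by linarith)
  have e1 : h t * (t * max 0 (t - ε)) * h t = t * max 0 (t - ε) * (t + δ)⁻¹ := by
    calc h t * (t * max 0 (t - ε)) * h t = (h t * h t) * (t * max 0 (t - ε)) := by ring
      _ = t * max 0 (t - ε) * (t + δ)⁻¹ := by rw [hh2]; ring
  rw [Real.norm_eq_abs, e1]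
  have e2 : t * max 0 (t - ε) * (t + δ)⁻¹ - max 0 (t - ε)
      = -(max 0 (t - ε) * δ / (t + δ)) := by
    field_simp
    ring
  rw [e2, abs_neg, abs_of_nonneg (by positivity), div_le_iff₀ htδ]
  nlinarith

set_option maxHeartbeats 1000000 in
private lemma exists_pq {T d₁ d₂ e₁ e₂ : B} (h : CB T (e₁ + e₂)) (h1 : CB e₁ d₁)
    (h2 : CB e₂ d₂) :
    ∃ p q : ℕ → B, Tendsto
      (fun n => ‖star (p n) * d₁ * p n + star (q n) * d₂ * q n - T‖) atTop (nhds 0) := by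
  obtain ⟨r, hr⟩ := h
  obtain ⟨p0, hp0⟩ := h1
  obtain ⟨q0, hq0⟩ := h2
  have key1 : ∀ n : ℕ, ∃ k : ℕ,
      ‖star (p0 k) * d₁ * p0 k - e₁‖ < (1 / ((n : ℝ) + 1)) / (‖r n‖ ^ 2 + 1) := by
    intro n
    have hpos : 0 < (1 / ((n : ℝ) + 1)) / (‖r n‖ ^ 2 + 1) := by positivity
    obtain ⟨N, hN⟩ := (Metric.tendsto_atTop.mp hp0) _ hpos
    refine ⟨N, ?_⟩
    have := hN N le_rfl
    rwa [Real.dist_eq, sub_zero, abs_of_nonneg (norm_nonneg _)] at this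
  have key2 : ∀ n : ℕ, ∃ k : ℕ,
      ‖star (q0 k) * d₂ * q0 k - e₂‖ < (1 / ((n : ℝ) + 1)) / (‖r n‖ ^ 2 + 1) := by
    intro n
    have hpos : 0 < (1 / ((n : ℝ) + 1)) / (‖r n‖ ^ 2 + 1) := by positivity
    obtain ⟨N, hN⟩ := (Metric.tendsto_atTop.mp hq0) _ hpos
    refine ⟨N, ?_⟩
    have := hN N le_rfl
    rwa [Real.dist_eq, sub_zero, abs_of_nonneg (norm_nonneg _)] at this
  choose m₁ hm₁ using key1
  choose m₂ hm₂ using key2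
  refine ⟨fun n => p0 (m₁ n) * r n, fun n => q0 (m₂ n) * r n, ?_⟩
  have hb : ∀ n : ℕ,
      ‖star (p0 (m₁ n) * r n) * d₁ * (p0 (m₁ n) * r n)
        + star (q0 (m₂ n) * r n) * d₂ * (q0 (m₂ n) * r n) - T‖
      ≤ 1 / ((n : ℝ) + 1) + 1 / ((n : ℝ) + 1) + ‖star (r n) * (e₁ + e₂) * r n - T‖ := by
    intro n
    have hid : star (p0 (m₁ n) * r n) * d₁ * (p0 (m₁ n) * r n)
        + star (q0 (m₂ n) * r n) * d₂ * (q0 (m₂ n) * r n) - T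
        = star (r n) * (star (p0 (m₁ n)) * d₁ * p0 (m₁ n) - e₁) * r n
          + star (r n) * (star (q0 (m₂ n)) * d₂ * q0 (m₂ n) - e₂) * r n
          + (star (r n) * (e₁ + e₂) * r n - T) := by
      simp only [StarMul.star_mul]
      noncomm_ring
    have hbound : ∀ X : B, ‖X‖ ≤ (1 / ((n : ℝ) + 1)) / (‖r n‖ ^ 2 + 1) →
        ‖star (r n) * X * r n‖ ≤ 1 / ((n : ℝ) + 1) := by
      intro X hX
      calc ‖star (r n) * X * r n‖ ≤ ‖r n‖ ^ 2 * ‖X‖ := norm_conj_le _ _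
        _ ≤ ‖r n‖ ^ 2 * ((1 / ((n : ℝ) + 1)) / (‖r n‖ ^ 2 + 1)) := by gcongr
        _ = (1 / ((n : ℝ) + 1)) * (‖r n‖ ^ 2 / (‖r n‖ ^ 2 + 1)) := by ring
        _ ≤ (1 / ((n : ℝ) + 1)) * 1 := by
            refine mul_le_mul_of_nonneg_left ?_ (by positivity)
            rw [div_le_one (by positivity)]; linarith
        _ = 1 / ((n : ℝ) + 1) := mul_one _
    rw [hid]
    refine (norm_add_le _ _).trans (add_le_add ((norm_add_le _ _).trans
      (add_le_add ?_ ?_)) le_rfl)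
    · exact hbound _ (hm₁ n).le
    · exact hbound _ (hm₂ n).le
  refine squeeze_zero (fun n => norm_nonneg _) hb ?_
  have := (tendsto_one_div_add_atTop_nhds_zero_nat.add
    tendsto_one_div_add_atTop_nhds_zero_nat).add hr
  simpa using this

end CutdownAux

set_option maxHeartbeats 1000000 in
/-- the cut-down comparison lemma
`(a - (ε₁ + ε₂))₊ ⊕ 0 ≼ (gag - ε₁)₊ ⊕ (1 - g² - ε₂)₊` in `M₂(B)`. -/
theorem cutdown_comparison
    {B : Type*} [CStarAlgebra B] [PartialOrder B] [StarOrderedRing B]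
    (a g : B) (ha₀ : 0 ≤ a) (ha₁ : a ≤ 1) (hg₀ : 0 ≤ g) (hg₁ : g ≤ 1)
    (ε₁ ε₂ : ℝ) (hε₁ : 0 < ε₁) (hε₂ : 0 < ε₂) :
    MatCuntzSubIn (Set.univ : Set B)
      (Matrix.diagonal ![posCut (ε₁ + ε₂) a, 0])
      (Matrix.diagonal ![posCut ε₁ (g * a * g), posCut ε₂ (1 - g ^ 2)]) := by
  classical
  obtain hTriv | hNontriv := subsingleton_or_nontrivial B
  · refine ⟨fun _ => 0, fun _ _ _ => trivial, ?_⟩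
    have hall : ∀ M N : Matrix (Fin 2) (Fin 2) B, M = N := fun M N => by
      ext i j; exact Subsingleton.elim _ _
    have h0 : (fun _ : ℕ => star (0 : Matrix (Fin 2) (Fin 2) B) *
        Matrix.diagonal ![posCut ε₁ (g * a * g), posCut ε₂ (1 - g ^ 2)] * 0)
        = fun _ : ℕ => Matrix.diagonal ![posCut (ε₁ + ε₂) a, 0] := by
      funext k; exact hall _ _
    rw [h0]
    exact tendsto_const_nhds
  have hasa : IsSelfAdjoint a := .of_nonneg ha₀
  have hgsa : IsSelfAdjoint g := .of_nonneg hg₀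
  have hssa : IsSelfAdjoint (cfc Real.sqrt a) := cfc_predicate _ a
  have hss : cfc Real.sqrt a * cfc Real.sqrt a = a := sqrt_mul_sqrt ha₀
  have hg2 : g ^ 2 ≤ 1 := by
    have hgn : ‖g‖ ≤ 1 := (CStarAlgebra.norm_le_one_iff_of_nonneg g hg₀).mpr hg₁
    calc g ^ 2 = cfc (fun t : ℝ => t ^ 2) g := (cfc_pow_id g 2 hgsa).symm
      _ ≤ 1 := by
          refine cfc_le_one _ _ fun t ht => ?_
          have h1 : ‖t‖ ≤ ‖g‖ := spectrum.norm_le_norm_of_mem ht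
          rw [Real.norm_eq_abs] at h1
          have h2 := abs_le.mp (h1.trans hgn)
          nlinarith [h2.1, h2.2]
  have hb0 : (0 : B) ≤ 1 - g ^ 2 := sub_nonneg.mpr hg2
  have hbsa : IsSelfAdjoint ((1 : B) - g ^ 2) := .of_nonneg hb0
  have hrsa : IsSelfAdjoint (cfc Real.sqrt (1 - g ^ 2)) := cfc_predicate _ _
  have hrr : cfc Real.sqrt (1 - g ^ 2) * cfc Real.sqrt (1 - g ^ 2) = 1 - g ^ 2 :=
    sqrt_mul_sqrt hb0
  set s := cfc Real.sqrt a with hsdef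
  set w := cfc Real.sqrt (1 - g ^ 2) with hwdef
  set x₁ := g * s with hx₁def
  set x₂ := w * s with hx₂def
  have hstar₁ : star x₁ = s * g := by rw [hx₁def, StarMul.star_mul, hssa.star_eq, hgsa.star_eq]
  have hstar₂ : star x₂ = s * w := by rw [hx₂def, StarMul.star_mul, hssa.star_eq, hrsa.star_eq]
  have hsum : star x₁ * x₁ + star x₂ * x₂ = a := by
    rw [hstar₁, hstar₂, hx₁def, hx₂def]
    calc s * g * (g * s) + s * w * (w * s) = s * (g * g + w * w) * s := by noncomm_ring
      _ = s * (1 : B) * s := by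
          rw [show g * g = g ^ 2 from (sq g).symm, hrr]
          congr 1
          congr 1
          abel
      _ = a := by rw [mul_one, hss]
  have key1 : CB (posCut (ε₁ + ε₂) a)
      (posCut ε₁ (star x₁ * x₁) + posCut ε₂ (star x₂ * x₂)) := by
    refine cb_posCut_of_le _ hasa (add_nonneg (posCut_nonneg _ _) (posCut_nonneg _ _)) ?_
    have hle1 : star x₁ * x₁ - algebraMap ℝ B ε₁ ≤ posCut ε₁ (star x₁ * x₁) :=
      sub_algebraMap_le_posCut _ _ (IsSelfAdjoint.star_mul_self x₁)
    have hle2 : star x₂ * x₂ - algebraMap ℝ B ε₂ ≤ posCut ε₂ (star x₂ * x₂) :=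
      sub_algebraMap_le_posCut _ _ (IsSelfAdjoint.star_mul_self x₂)
    have hsplit : a - algebraMap ℝ B (ε₁ + ε₂)
        = (star x₁ * x₁ - algebraMap ℝ B ε₁) + (star x₂ * x₂ - algebraMap ℝ B ε₂) := by
      rw [map_add, ← hsum]; abel
    rw [hsplit]
    exact add_le_add hle1 hle2
  have hx1x1 : x₁ * star x₁ = g * a * g := by
    rw [hstar₁, hx₁def]
    calc g * s * (s * g) = g * (s * s) * g := by noncomm_ring
      _ = g * a * g := by rw [hss]
  have key2 : CB (posCut ε₁ (star x₁ * x₁)) (posCut ε₁ (g * a * g)) := by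
    have := cb_posCut_star_mul x₁ ε₁ hε₁.le
    rwa [hx1x1] at this
  have hx2x2 : x₂ * star x₂ = w * a * w := by
    rw [hstar₂, hx₂def]
    calc w * s * (s * w) = w * (s * s) * w := by noncomm_ring
      _ = w * a * w := by rw [hss]
  have hwaw_sa : IsSelfAdjoint (w * a * w) := by
    have h1 : star (w * a * w) = w * (a * w) := by
      rw [StarMul.star_mul, StarMul.star_mul, hrsa.star_eq, hasa.star_eq]
    show star (w * a * w) = w * a * w
    rw [h1, mul_assoc]
  have hyb : w * a * w ≤ 1 - g ^ 2 := by
    have h1 := IsSelfAdjoint.conjugate_le_conjugate ha₁ hrsa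
    rwa [mul_one, hrr] at h1
  have key3 : CB (posCut ε₂ (star x₂ * x₂)) (posCut ε₂ (1 - g ^ 2)) := by
    refine cb_trans (b := posCut ε₂ (w * a * w)) ?_ ?_
    · have := cb_posCut_star_mul x₂ ε₂ hε₂.le
      rwa [hx2x2] at this
    · refine cb_posCut_of_le ε₂ hwaw_sa (posCut_nonneg _ _) ?_
      calc w * a * w - algebraMap ℝ B ε₂ ≤ (1 - g ^ 2) - algebraMap ℝ B ε₂ :=
            sub_le_sub_right hyb _
        _ ≤ posCut ε₂ (1 - g ^ 2) := sub_algebraMap_le_posCut _ _ hbsa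
  obtain ⟨p, q, hpq⟩ := exists_pq key1 key2 key3
  have hconv : Filter.Tendsto
      (fun n => star (p n) * posCut ε₁ (g * a * g) * p n
        + star (q n) * posCut ε₂ (1 - g ^ 2) * q n) Filter.atTop
      (nhds (posCut (ε₁ + ε₂) a)) :=
    tendsto_iff_norm_sub_tendsto_zero.mpr hpq
  refine ⟨fun k => Matrix.of ![![p k, 0], ![q k, 0]], fun _ _ _ => trivial, ?_⟩
  have hmat : ∀ k, star (Matrix.of ![![p k, 0], ![q k, 0]]) *
      Matrix.diagonal ![posCut ε₁ (g * a * g), posCut ε₂ (1 - g ^ 2)] *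
        Matrix.of ![![p k, 0], ![q k, 0]]
      = Matrix.of ![![star (p k) * posCut ε₁ (g * a * g) * p k
          + star (q k) * posCut ε₂ (1 - g ^ 2) * q k, 0], ![0, 0]] := by
    intro k
    ext i j
    fin_cases i <;> fin_cases j <;>
      simp [Matrix.mul_apply, Matrix.star_apply, Fin.sum_univ_two, Matrix.diagonal]
  simp only [hmat]
  refine tendsto_pi_nhds.mpr ?_
  intro i
  rw [tendsto_pi_nhds]
  intro j
  fin_cases i <;> fin_cases j
  · simpa [Matrix.diagonal] using hconv
  · simpa [Matrix.diagonal] using (tendsto_const_nhds :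
      Filter.Tendsto (fun _ : ℕ => (0 : B)) Filter.atTop (nhds 0))
  · simpa [Matrix.diagonal] using (tendsto_const_nhds :
      Filter.Tendsto (fun _ : ℕ => (0 : B)) Filter.atTop (nhds 0))
  · simpa [Matrix.diagonal] using (tendsto_const_nhds :
      Filter.Tendsto (fun _ : ℕ => (0 : B)) Filter.atTop (nhds 0))
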